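/- For every integer q ≥ 2 and every real α with α > √(ln q), there exists a natural number N such that for all n ≥ N, (1/q − 2α/(q√n) − 2/(qn))^(n/2 − α√n) · (1/q + 2α/(q√n) + 2/(qn))^(n/2 + α√n) ≥ q^(−(n−2)). -/

import Mathlib

set_option maxHeartbeats 1000000

open Real Filter Finset Topology

/-- For every integer `q ≥ 2` and `α > √(ln q)`, eventually
`(1/q - 2α/(q√n) - 2/(qn))^(n/2 - α√n) · (1/q + 2α/(q√n) + 2/(qn))^(n/2 + α√n) ≥ q^(-(n-2))`. -/
theorem qary_interval_length_ge (q : ℕ) (hq : 2 ≤ q) (α : ℝ)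
    (hα : Real.sqrt (Real.log q) < α) :
    ∃ N : ℕ, ∀ n : ℕ, N ≤ n →
      (q : ℝ) ^ (-((n : ℝ) - 2)) ≤
        (1 / q - 2 * α / (q * Real.sqrt n) - 2 / (q * n)) ^ ((n : ℝ) / 2 - α * Real.sqrt n) *
          (1 / q + 2 * α / (q * Real.sqrt n) + 2 / (q * n)) ^ ((n : ℝ) / 2 + α * Real.sqrt n) := by
  have hq2 : (2:ℝ) ≤ (q:ℝ) := by exact_mod_cast hq
  have hq1 : (1:ℝ) < (q:ℝ) := by linarith
  have hqpos : (0:ℝ) < (q:ℝ) := by linarith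
  have hlog : 0 < Real.log q := Real.log_pos hq1
  have hα0 : 0 < α := (Real.sqrt_pos.mpr hlog).trans hα
  have hα2 : Real.log q < α ^ 2 := by
    have h1 := Real.sq_sqrt hlog.le
    nlinarith [Real.sqrt_nonneg (Real.log q)]
  have hδ : 0 < 2 * α ^ 2 - 2 * Real.log q := by linarith
  -- basic limits
  have hsqrt : Tendsto (fun n : ℕ => Real.sqrt n) atTop atTop := by
    have h1 : Tendsto (fun x : ℝ => x ^ ((1:ℝ)/2)) atTop atTop :=
      tendsto_rpow_atTop (by norm_num)
    have h2 := h1.comp tendsto_natCast_atTop_atTop (α := ℕ)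
    refine h2.congr fun n => ?_
    simp [Real.sqrt_eq_rpow]
  have hinvsqrt : Tendsto (fun n : ℕ => 1 / Real.sqrt n) atTop (𝓝 0) := by
    simpa [Pi.inv_def] using hsqrt.inv_tendsto_atTop
  have hinv : Tendsto (fun n : ℕ => 1 / (n:ℝ)) atTop (𝓝 0) :=
    tendsto_one_div_atTop_nhds_zero_nat
  -- eventual conditions
  have hc1 : ∀ᶠ n : ℕ in atTop, 1 ≤ n := eventually_ge_atTop 1
  have hc2 : ∀ᶠ n : ℕ in atTop, 2 * α ≤ Real.sqrt n := hsqrt.eventually_ge_atTop (2 * α)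
  have hc3 : ∀ᶠ n : ℕ in atTop, 2 * α / Real.sqrt n + 2 / (n:ℝ) ≤ 1/2 := by
    have hT : Tendsto (fun n : ℕ => 2 * α * (1 / Real.sqrt n) + 2 * (1 / (n:ℝ))) atTop (𝓝 0) := by
      have := (hinvsqrt.const_mul (2*α)).add (hinv.const_mul 2)
      simpa using this
    filter_upwards [hT.eventually (ge_mem_nhds (by norm_num : (0:ℝ) < 1/2))] with n hn
    calc 2 * α / Real.sqrt n + 2 / (n:ℝ)
        = 2 * α * (1 / Real.sqrt n) + 2 * (1 / (n:ℝ)) := by ring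
      _ ≤ 1/2 := hn
  have hc4 : ∀ᶠ n : ℕ in atTop,
      2 / (n:ℝ) + 2 * (2*α+2)^3 / Real.sqrt n ≤ 2 * α ^ 2 - 2 * Real.log q := by
    have hT : Tendsto (fun n : ℕ => 2 * (1 / (n:ℝ)) + 2 * (2*α+2)^3 * (1 / Real.sqrt n))
        atTop (𝓝 0) := by
      have := (hinv.const_mul 2).add (hinvsqrt.const_mul (2 * (2*α+2)^3))
      simpa using this
    filter_upwards [hT.eventually (ge_mem_nhds hδ)] with n hn
    calc 2 / (n:ℝ) + 2 * (2*α+2)^3 / Real.sqrt n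
        = 2 * (1 / (n:ℝ)) + 2 * (2*α+2)^3 * (1 / Real.sqrt n) := by ring
      _ ≤ _ := hn
  rw [← eventually_atTop]
  filter_upwards [hc1, hc2, hc3, hc4] with n hn1 hn2 hn3 hn4
  -- notation
  set s : ℝ := Real.sqrt n with hs_def
  have hn0 : (0:ℝ) < n := by exact_mod_cast Nat.lt_of_lt_of_le Nat.zero_lt_one hn1
  have hn1' : (1:ℝ) ≤ (n:ℝ) := by exact_mod_cast hn1
  have hs2 : s ^ 2 = (n:ℝ) := Real.sq_sqrt (Nat.cast_nonneg n)
  have hs1 : 1 ≤ s := by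
    rw [hs_def, show (1:ℝ) = Real.sqrt 1 by simp]
    exact Real.sqrt_le_sqrt hn1'
  have hs0 : 0 < s := by linarith
  set ε : ℝ := 2 * α / s + 2 / (n:ℝ) with hε_def
  have hεval : ε = 2 * α / s + 2 / s ^ 2 := by rw [hε_def, hs2]
  clear_value ε
  clear_value s
  have hε0 : 0 < ε := by
    rw [hεval]; positivity
  have hεhalf : ε ≤ 1/2 := hn3
  have hε1 : ε < 1 := by linarith
  -- Taylor bounds for log
  have habs : |ε| < 1 := by rw [abs_of_pos hε0]; exact hε1
  have habs' : |(-ε)| < 1 := by rwa [abs_neg]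
  have hlb1 : -ε - ε^2/2 - 2*ε^3 ≤ Real.log (1 - ε) := by
    have h := Real.abs_log_sub_add_sum_range_le habs 2
    rw [abs_of_pos hε0] at h
    have hsum : (∑ i ∈ Finset.range 2, ε ^ (i + 1) / (i + 1)) = ε + ε^2/2 := by
      simp [Finset.sum_range_succ]; ring
    rw [hsum] at h
    have hden : ε^3 / (1 - ε) ≤ 2 * ε^3 := by
      calc ε^3 / (1 - ε) ≤ ε^3 / (1/2) :=
            div_le_div_of_nonneg_left (by positivity) (by norm_num) (by linarith)
        _ = 2 * ε^3 := by ring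
    have h2 := (abs_le.mp h).1
    linarith
  have hlb2 : ε - ε^2/2 - 2*ε^3 ≤ Real.log (1 + ε) := by
    have h := Real.abs_log_sub_add_sum_range_le habs' 2
    rw [abs_neg, abs_of_pos hε0] at h
    have hsum : (∑ i ∈ Finset.range 2, (-ε) ^ (i + 1) / (i + 1)) = -ε + ε^2/2 := by
      simp [Finset.sum_range_succ]; ring
    rw [hsum, show (1 - -ε) = 1 + ε by ring] at h
    have hden : ε^3 / (1 - ε) ≤ 2 * ε^3 := by
      calc ε^3 / (1 - ε) ≤ ε^3 / (1/2) :=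
            div_le_div_of_nonneg_left (by positivity) (by norm_num) (by linarith)
        _ = 2 * ε^3 := by ring
    have h2 := (abs_le.mp h).1
    linarith
  -- exponents
  set a : ℝ := (n:ℝ)/2 - α * s with ha_def
  set b : ℝ := (n:ℝ)/2 + α * s with hb_def
  have ha0 : 0 ≤ a := by
    rw [ha_def, ← hs2]; nlinarith
  have hb0 : 0 ≤ b := by
    rw [hb_def]; positivity
  have hab : a + b = (n:ℝ) := by rw [ha_def, hb_def]; ring
  clear_value a
  clear_value b
  -- the key log inequality
  have hεb : ε ≤ (2*α+2)/s := by
    rw [hεval]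
    have h2s : 2 / s^2 ≤ 2 / s := by
      apply div_le_div_of_nonneg_left (by norm_num) hs0
      nlinarith
    have hsplit : (2*α+2)/s = 2*α/s + 2/s := by ring
    rw [hsplit]
    linarith
  have hcube : ε^3 ≤ (2*α+2)^3 / s^3 := by
    have h := pow_le_pow_left₀ hε0.le hεb 3
    rwa [div_pow] at h
  have key : 2 * Real.log q ≤ a * Real.log (1 - ε) + b * Real.log (1 + ε) := by
    have g1 : a * (-ε - ε^2/2 - 2*ε^3) ≤ a * Real.log (1 - ε) :=
      mul_le_mul_of_nonneg_left hlb1 ha0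
    have g2 : b * (ε - ε^2/2 - 2*ε^3) ≤ b * Real.log (1 + ε) :=
      mul_le_mul_of_nonneg_left hlb2 hb0
    have e1 : a * (-ε - ε^2/2 - 2*ε^3) + b * (ε - ε^2/2 - 2*ε^3)
        = 2*α*s*ε - s^2 * ε^2 / 2 - 2 * s^2 * ε^3 := by
      rw [ha_def, hb_def, ← hs2]; ring
    have exp1 : 2*α*s*ε = 4*α^2 + 4*α/s := by
      rw [hεval]; field_simp; ring
    have exp2 : s^2 * ε^2 / 2 = 2*α^2 + 4*α/s + 2/s^2 := by
      rw [hεval]; field_simp; ring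
    have exp3 : 2 * s^2 * ε^3 ≤ 2 * (2*α+2)^3 / s := by
      calc 2 * s^2 * ε^3 ≤ 2 * s^2 * ((2*α+2)^3 / s^3) := by
            apply mul_le_mul_of_nonneg_left hcube; positivity
        _ = 2 * (2*α+2)^3 / s := by field_simp
    have h4' : 2/s^2 + 2*(2*α+2)^3/s ≤ 2 * α^2 - 2 * Real.log q := by
      rw [hs2]; exact hn4
    linarith
  -- rewrite the factors
  have hA : 1 / (q:ℝ) - 2 * α / (q * s) - 2 / (q * n) = (1 - ε) / q := by
    rw [hε_def]; field_simp; ring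
  have hB : 1 / (q:ℝ) + 2 * α / (q * s) + 2 / (q * n) = (1 + ε) / q := by
    rw [hε_def]; field_simp; ring
  rw [hA, hB]
  have h1ε : 0 < 1 - ε := by linarith
  have h1ε' : 0 < 1 + ε := by linarith
  -- compute the product as exp / q^n
  have hrw : ((1 - ε)/q) ^ a * ((1 + ε)/q) ^ b
      = Real.exp (a * Real.log (1 - ε) + b * Real.log (1 + ε)) / (q:ℝ) ^ ((n:ℝ)) := by
    rw [Real.div_rpow h1ε.le hqpos.le, Real.div_rpow h1ε'.le hqpos.le]
    rw [div_mul_div_comm, ← Real.rpow_add hqpos, hab]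
    congr 1
    rw [Real.rpow_def_of_pos h1ε, Real.rpow_def_of_pos h1ε', ← Real.exp_add]
    ring_nf
  rw [hrw]
  have hlhs : (q:ℝ) ^ (-((n:ℝ) - 2)) = (q:ℝ)^(2:ℝ) / (q:ℝ) ^ ((n:ℝ)) := by
    rw [← Real.rpow_sub hqpos]; congr 1; ring
  rw [hlhs]
  gcongr
  calc (q:ℝ) ^ (2:ℝ) = Real.exp (2 * Real.log q) := by
        rw [Real.rpow_def_of_pos hqpos]; ring_nf
    _ ≤ _ := Real.exp_le_exp.mpr key
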